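/- There is an isomorphism of abelian groups ℤ/8 × ℤ/2 ≅ W(ℤ/8) sending (1, 0) to the class of [1] and (0, 1) to the class of ⟨⟨5⟩⟩ = [1] − [5]. -/

import Mathlib

noncomputable section
set_option synthInstance.maxHeartbeats 1000000
set_option maxHeartbeats 1600000

/-- The subgroup of squares of units of a commutative ring. -/
def squareUnits (R : Type) [CommRing R] : Subgroup Rˣ :=
  (powMonoidHom 2 : Rˣ →* Rˣ).range

/-- The group of square classes `Rˣ/(Rˣ)²`. -/
def SqCl (R : Type) [CommRing R] : Type := Rˣ ⧸ squareUnits R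

instance (R : Type) [CommRing R] : CommGroup (SqCl R) :=
  QuotientGroup.Quotient.commGroup (squareUnits R)

/-- The square class `[a]` of a unit `a`. -/
def cls {R : Type} [CommRing R] (a : Rˣ) : SqCl R := QuotientGroup.mk a

/-- The group ring `ℤ[Rˣ/(Rˣ)²]`. -/
abbrev GRing (R : Type) [CommRing R] := MonoidAlgebra ℤ (SqCl R)

/-- The generator `[a]` of the group ring, for a unit `a`. -/
def gen {R : Type} [CommRing R] (a : Rˣ) : GRing R :=
  MonoidAlgebra.of ℤ (SqCl R) (cls a)

/-- The set of relations defining the Grothendieck–Witt ring of a (connected semi-)local ring: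
`([a₁]+[a₂]+[a₃]+[a₄]) − ([b₁]+[b₂]+[b₃]+[b₄])` whenever there exists `P ∈ GL₄(R)` with
`P ⬝ diag(a₁,…,a₄) ⬝ Pᵀ = diag(b₁,…,b₄)`. -/
def gwRel (R : Type) [CommRing R] : Set (GRing R) :=
  {x | ∃ (a b : Fin 4 → Rˣ) (P : Matrix (Fin 4) (Fin 4) R),
    IsUnit P.det ∧
    P * Matrix.diagonal (fun i => (a i : R)) * P.transpose =
      Matrix.diagonal (fun i => (b i : R)) ∧
    x = (∑ i, gen (a i)) - (∑ i, gen (b i))}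

/-- The (symmetric) Grothendieck–Witt ring of `R`, presented à la Knebusch–Rosenberg–Ware. -/
abbrev GW (R : Type) [CommRing R] := GRing R ⧸ Ideal.span (gwRel R)

/-- The class `[a] ∈ GW(R)` of a unit `a`. -/
def gw {R : Type} [CommRing R] (a : Rˣ) : GW R :=
  Ideal.Quotient.mk (Ideal.span (gwRel R)) (gen a)

/-- The (symmetric) Witt ring of `R` : the quotient of `GW(R)` by the ideal generated by the
hyperbolic element `[1] + [-1]`. -/
abbrev Wr (R : Type) [CommRing R] := GW R ⧸ Ideal.span {gw (R := R) 1 + gw (-1)}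

/-- The class in the Witt ring of a unit `a`. -/
def wcl {R : Type} [CommRing R] (a : Rˣ) : Wr R :=
  Ideal.Quotient.mk (Ideal.span {gw (R := R) 1 + gw (-1)}) (gw a)

namespace WE
open Matrix Finset
open Matrix Finset

abbrev Z8 := ZMod 8

def zeta : ℂ := Complex.exp (2 * Real.pi * Complex.I / 8)

lemma hzeta : IsPrimitiveRoot zeta 8 := Complex.isPrimitiveRoot_exp 8 (by norm_num)

lemma zeta8 : zeta ^ 8 = 1 := hzeta.pow_eq_one

lemma zeta4 : zeta ^ 4 = -1 := by
  have h8 : (zeta ^ 4 - 1) * (zeta ^ 4 + 1) = 0 := by linear_combination zeta8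
  rcases mul_eq_zero.mp h8 with h | h
  · exact absurd (sub_eq_zero.mp h)
      (hzeta.pow_ne_one_of_pos_of_lt (l := 4) (by norm_num) (by norm_num))
  · linear_combination h

def ec : Z8 → ℂ := fun x => zeta ^ x.val

lemma zpow_mod (m : ℕ) : zeta ^ (m % 8) = zeta ^ m := by
  conv_rhs => rw [← Nat.mod_add_div m 8]
  rw [pow_add, pow_mul, zeta8, one_pow, mul_one]

lemma ec_add (x y : Z8) : ec (x + y) = ec x * ec y := by
  rw [ec, ZMod.val_add, zpow_mod, pow_add]; rfl

lemma ec_zero : ec 0 = 1 := by rw [ec, ZMod.val_zero, pow_zero]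

lemma ec_four : ec 4 = -1 := by
  rw [ec, show (4 : Z8).val = 4 from rfl, zeta4]

lemma ec_sum4 (f : Fin 4 → Z8) : ec (∑ i, f i) = ∏ i, ec (f i) := by
  rw [Fin.sum_univ_four, Fin.prod_univ_four, ec_add, ec_add, ec_add]

def Gs (M : Matrix (Fin 4) (Fin 4) Z8) : ℂ :=
  ∑ x : Fin 4 → Z8, ec (x ⬝ᵥ (M *ᵥ x))

lemma quad_reindex (M P : Matrix (Fin 4) (Fin 4) Z8) (hP : IsUnit P.det) :
    Gs (P * M * Pᵀ) = Gs M := by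
  have hPT : IsUnit (Pᵀ).det := by rwa [Matrix.det_transpose]
  have h1 : Pᵀ * (Pᵀ)⁻¹ = 1 := Matrix.mul_nonsing_inv _ hPT
  have h2 : (Pᵀ)⁻¹ * Pᵀ = 1 := Matrix.nonsing_inv_mul _ hPT
  let σ : (Fin 4 → Z8) ≃ (Fin 4 → Z8) :=
    { toFun := fun x => Pᵀ *ᵥ x
      invFun := fun x => (Pᵀ)⁻¹ *ᵥ x
      left_inv := fun x => by
        show (Pᵀ)⁻¹ *ᵥ (Pᵀ *ᵥ x) = x
        rw [Matrix.mulVec_mulVec, h2, Matrix.one_mulVec]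
      right_inv := fun x => by
        show Pᵀ *ᵥ ((Pᵀ)⁻¹ *ᵥ x) = x
        rw [Matrix.mulVec_mulVec, h1, Matrix.one_mulVec] }
  have step : ∀ x : Fin 4 → Z8, ec (x ⬝ᵥ ((P * M * Pᵀ) *ᵥ x)) = ec ((σ x) ⬝ᵥ (M *ᵥ (σ x))) := by
    intro x
    show ec (x ⬝ᵥ ((P * M * Pᵀ) *ᵥ x)) = ec ((Pᵀ *ᵥ x) ⬝ᵥ (M *ᵥ (Pᵀ *ᵥ x)))
    congr 1
    rw [mul_assoc, ← Matrix.mulVec_mulVec, Matrix.dotProduct_mulVec,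
      ← Matrix.transpose_transpose P, Matrix.vecMul_transpose, Matrix.transpose_transpose,
      Matrix.mulVec_mulVec]
  unfold Gs
  rw [Finset.sum_congr rfl (fun x _ => step x)]
  exact Fintype.sum_equiv σ _ _ (fun x => rfl)

lemma quad_diag (c : Fin 4 → Z8) (x : Fin 4 → Z8) :
    x ⬝ᵥ ((Matrix.diagonal c) *ᵥ x) = ∑ i, c i * (x i) ^ 2 := by
  unfold dotProduct
  apply Finset.sum_congr rfl
  intro i _
  rw [Matrix.mulVec_diagonal]; ring

lemma Gs_diag (c : Fin 4 → Z8) :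
    Gs (Matrix.diagonal c) = ∏ i, ∑ t : Z8, ec (c i * t ^ 2) := by
  rw [Finset.prod_univ_sum, Fintype.piFinset_univ]
  unfold Gs
  apply Finset.sum_congr rfl
  intro x _
  rw [quad_diag, ec_sum4]

lemma unit_four (x y : Z8) (h : x * y = 1) : x * 4 = 4 := by revert x y; decide

lemma inner_sum (c : Z8) (hc : ∃ v, c * v = 1) : ∑ t : Z8, ec (c * t ^ 2) = 4 * ec c := by
  obtain ⟨v, hv⟩ := hc
  have h4 : c * 4 = 4 := unit_four c v hv
  rw [show (Finset.univ : Finset Z8) = {0,1,2,3,4,5,6,7} from by decide]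
  rw [Finset.sum_insert (by decide), Finset.sum_insert (by decide),
    Finset.sum_insert (by decide), Finset.sum_insert (by decide),
    Finset.sum_insert (by decide), Finset.sum_insert (by decide),
    Finset.sum_insert (by decide), Finset.sum_singleton]
  rw [show (0:Z8)^2 = 0 from rfl, show (1:Z8)^2 = 1 from rfl,
    show (2:Z8)^2 = 4 from rfl, show (3:Z8)^2 = 1 from by decide,
    show (4:Z8)^2 = 0 from by decide, show (5:Z8)^2 = 1 from by decide,
    show (6:Z8)^2 = 4 from by decide, show (7:Z8)^2 = 1 from by decide]
  rw [mul_zero, mul_one, h4, ec_zero, ec_four]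
  ring

lemma INVsum (a b : Fin 4 → Z8ˣ) (P : Matrix (Fin 4) (Fin 4) Z8) (hP : IsUnit P.det)
    (h : P * Matrix.diagonal (fun i => (a i : Z8)) * Pᵀ = Matrix.diagonal (fun i => (b i : Z8))) :
    ∑ i, (a i : Z8) = ∑ i, (b i : Z8) := by
  have hG : Gs (Matrix.diagonal fun i => (a i : Z8)) = Gs (Matrix.diagonal fun i => (b i : Z8)) := by
    rw [← h]; exact (quad_reindex _ P hP).symm
  rw [Gs_diag, Gs_diag] at hG
  have ha : ∀ u : Z8ˣ, ∑ t : Z8, ec ((u : Z8) * t ^ 2) = 4 * ec (u : Z8) := fun u =>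
    inner_sum _ ⟨((u⁻¹ : Z8ˣ) : Z8), u.mul_inv⟩
  simp only [ha] at hG
  rw [Finset.prod_mul_distrib, Finset.prod_mul_distrib, Finset.prod_const,
    ← ec_sum4, ← ec_sum4] at hG
  have h2 : ec (∑ i, (a i : Z8)) = ec (∑ i, (b i : Z8)) := by
    have h44 : ((4 : ℂ) ^ (Finset.univ : Finset (Fin 4)).card) ≠ 0 := pow_ne_zero _ (by norm_num)
    exact mul_left_cancel₀ h44 hG
  exact ZMod.val_injective 8 (hzeta.pow_inj (ZMod.val_lt _) (ZMod.val_lt _) h2)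

def u3 : Z8ˣ := ZMod.unitOfCoprime 3 (by norm_num)
def u5 : Z8ˣ := ZMod.unitOfCoprime 5 (by norm_num)

def sfun : Z8 → Z8 := fun x => if x = 3 ∨ x = 7 then 7 else 1
def eps : Z8 → Z8 := fun x => if x = 3 ∨ x = 5 then 1 else 0

lemma unit_sq' (x y : Z8) (h : x * y = 1) : x * x = 1 := by revert x y; decide

lemma L2 (x y u v : Z8) (hx : x * u = 1) (hy : y * v = 1) :
    sfun x + sfun y = x + y + 4 * eps (x * y) := by revert x y u v; decide

lemma L2' (p q u v : Z8) (hp : p * u = 1) (hq : q * v = 1) :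
    4 * (eps p + eps q) = 4 * eps (p * q) := by revert p q u v; decide

lemma wit (u : Z8ˣ) : (u : Z8) * ((u⁻¹ : Z8ˣ) : Z8) = 1 := u.mul_inv

lemma wit2 (u v : Z8ˣ) : ((u : Z8) * (v : Z8)) * (((u * v)⁻¹ : Z8ˣ) : Z8) = 1 := by
  rw [← Units.val_mul]; exact (u * v).mul_inv

lemma sig_sum (c : Fin 4 → Z8ˣ) :
    ∑ i, sfun (c i : Z8) = (∑ i, (c i : Z8)) + 4 * eps (∏ i, (c i : Z8)) := by
  rw [Fin.sum_univ_four, Fin.sum_univ_four, Fin.prod_univ_four]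
  have h01 := L2 _ _ _ _ (wit (c 0)) (wit (c 1))
  have h23 := L2 _ _ _ _ (wit (c 2)) (wit (c 3))
  have hp := L2' _ _ _ _ (wit2 (c 0) (c 1)) (wit2 (c 2) (c 3))
  have hassoc : ((c 0 : Z8) * (c 1)) * ((c 2 : Z8) * (c 3)) =
      (c 0 : Z8) * (c 1) * (c 2) * (c 3) := by ring
  rw [hassoc] at hp
  linear_combination h01 + h23 + hp

lemma INVdet (a b : Fin 4 → Z8ˣ) (P : Matrix (Fin 4) (Fin 4) Z8) (hP : IsUnit P.det)
    (h : P * Matrix.diagonal (fun i => (a i : Z8)) * Pᵀ = Matrix.diagonal (fun i => (b i : Z8))) :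
    ∏ i, (a i : Z8) = ∏ i, (b i : Z8) := by
  have hd := congrArg Matrix.det h
  rw [Matrix.det_mul, Matrix.det_mul, Matrix.det_transpose, Matrix.det_diagonal,
    Matrix.det_diagonal] at hd
  obtain ⟨v, hv⟩ := hP.exists_right_inv
  have h2 : P.det * P.det = 1 := unit_sq' _ _ hv
  linear_combination hd - (∏ i, (a i : Z8)) * h2

lemma INVsig (a b : Fin 4 → Z8ˣ) (P : Matrix (Fin 4) (Fin 4) Z8) (hP : IsUnit P.det)
    (h : P * Matrix.diagonal (fun i => (a i : Z8)) * Pᵀ = Matrix.diagonal (fun i => (b i : Z8))) :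
    ∑ i, sfun (a i : Z8) = ∑ i, sfun (b i : Z8) := by
  rw [sig_sum, sig_sum, INVsum a b P hP h, INVdet a b P hP h]

/-! ### ring homs -/

lemma squareUnits_triv (x : Z8ˣ) (hx : x ∈ squareUnits Z8) : x = 1 := by
  obtain ⟨y, rfl⟩ := hx
  have : ∀ u : Z8ˣ, powMonoidHom 2 u = 1 := by decide
  exact this y

def phi2 : Z8ˣ →* Z8ˣ where
  toFun u := if (u : Z8) = 3 ∨ (u : Z8) = 7 then -1 else 1
  map_one' := by decide
  map_mul' := by decide

def c1 : SqCl Z8 →* Z8ˣ :=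
  QuotientGroup.lift _ (MonoidHom.id Z8ˣ) (fun x hx => by rw [squareUnits_triv x hx]; rfl)

def c2 : SqCl Z8 →* Z8ˣ :=
  QuotientGroup.lift _ phi2 (fun x hx => by rw [squareUnits_triv x hx]; exact phi2.map_one)

def F1 : GRing Z8 →ₐ[ℤ] Z8 :=
  MonoidAlgebra.lift ℤ Z8 (SqCl Z8) ((Units.coeHom Z8).comp c1)

def F2 : GRing Z8 →ₐ[ℤ] Z8 :=
  MonoidAlgebra.lift ℤ Z8 (SqCl Z8) ((Units.coeHom Z8).comp c2)

def F : GRing Z8 →+* Z8 × Z8 := RingHom.prod F1.toRingHom F2.toRingHom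

lemma F1_gen (u : Z8ˣ) : F1 (gen u) = (u : Z8) := by
  rw [gen, F1, MonoidAlgebra.lift_of]; rfl

lemma F2_gen (u : Z8ˣ) : F2 (gen u) = sfun (u : Z8) := by
  rw [gen, F2, MonoidAlgebra.lift_of]
  show ((phi2 u : Z8ˣ) : Z8) = sfun (u : Z8)
  revert u; decide

lemma F_gen (u : Z8ˣ) : F (gen u) = ((u : Z8), sfun (u : Z8)) := by
  show (F1 (gen u), F2 (gen u)) = _
  rw [F1_gen, F2_gen]

lemma F_kills : ∀ x ∈ Ideal.span (gwRel Z8), F x = 0 := by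
  intro x hx
  rw [← RingHom.mem_ker]
  refine Ideal.span_le.mpr ?_ hx
  rintro y ⟨a, b, P, hP, heq, rfl⟩
  rw [SetLike.mem_coe, RingHom.mem_ker, map_sub, map_sum, map_sum]
  simp only [F_gen]
  rw [sub_eq_zero, Prod.ext_iff]
  exact ⟨by rw [Prod.fst_sum, Prod.fst_sum]; exact INVsum a b P hP heq,
    by rw [Prod.snd_sum, Prod.snd_sum]; exact INVsig a b P hP heq⟩


/-! ### descend F to the Witt ring -/

def FGW : GW Z8 →+* Z8 × Z8 := Ideal.Quotient.lift _ F F_kills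

lemma FGW_gw (u : Z8ˣ) : FGW (gw u) = ((u : Z8), sfun (u : Z8)) := by
  rw [gw, FGW, Ideal.Quotient.lift_mk, F_gen]

lemma FGW_kills : ∀ x ∈ Ideal.span {gw (R := Z8) 1 + gw (-1)}, FGW x = 0 := by
  intro x hx
  rw [← RingHom.mem_ker]
  refine Ideal.span_le.mpr ?_ hx
  rintro y hy
  rw [Set.mem_singleton_iff] at hy
  subst hy
  rw [SetLike.mem_coe, RingHom.mem_ker, map_add, FGW_gw, FGW_gw]
  decide

def FW : Wr Z8 →+* Z8 × Z8 := Ideal.Quotient.lift _ FGW FGW_kills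

lemma FW_wcl (u : Z8ˣ) : FW (wcl u) = ((u : Z8), sfun (u : Z8)) := by
  rw [wcl, FW, Ideal.Quotient.lift_mk, FGW_gw]

/-! ### relations in the Witt ring -/

lemma cls_mul (a b : Z8ˣ) : cls (a * b) = cls a * cls b := rfl

lemma gen_mul (a b : Z8ˣ) : gen (R := Z8) (a * b) = gen a * gen b := by
  rw [gen, gen, gen, cls_mul, _root_.map_mul]

lemma gw_mul (a b : Z8ˣ) : gw (R := Z8) (a * b) = gw a * gw b := by
  rw [gw, gw, gw, gen_mul, _root_.map_mul]

lemma wcl_mul (a b : Z8ˣ) : wcl (R := Z8) (a * b) = wcl a * wcl b := by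
  rw [wcl, wcl, wcl, gw_mul, _root_.map_mul]

lemma hyp0 : wcl (R := Z8) 1 + wcl (-1) = 0 := by
  rw [wcl, wcl, ← map_add, Ideal.Quotient.eq_zero_iff_mem]
  exact Ideal.subset_span rfl

lemma h4rel : wcl (R := Z8) u3 + wcl u5 = 0 := by
  have e1 : wcl (R := Z8) u5 * wcl 1 = wcl u5 := by
    rw [← wcl_mul, mul_one]
  have e2 : wcl (R := Z8) u5 * wcl (-1) = wcl u3 := by
    rw [← wcl_mul, show u5 * (-1) = u3 from by decide]
  calc wcl (R := Z8) u3 + wcl u5 = wcl u5 * (wcl 1 + wcl (-1)) := by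
        rw [mul_add, e1, e2]; ring
    _ = 0 := by rw [hyp0]; exact mul_zero (wcl (R := Z8) u5)

lemma relW (a b : Fin 4 → Z8ˣ) (P : Matrix (Fin 4) (Fin 4) Z8) (hP : IsUnit P.det)
    (heq : P * Matrix.diagonal (fun i => (a i : Z8)) * Pᵀ =
      Matrix.diagonal (fun i => (b i : Z8))) :
    (∑ i, wcl (a i)) = ∑ i, wcl (b i) := by
  have hx : ((∑ i, gen (a i)) - ∑ i, gen (b i)) ∈ Ideal.span (gwRel Z8) :=
    Ideal.subset_span ⟨a, b, P, hP, heq, rfl⟩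
  have h0 : (Ideal.Quotient.mk (Ideal.span (gwRel Z8))) ((∑ i, gen (a i)) - ∑ i, gen (b i)) = 0 :=
    Ideal.Quotient.eq_zero_iff_mem.mpr hx
  rw [map_sub, map_sum, map_sum, sub_eq_zero] at h0
  have h1 := congrArg (Ideal.Quotient.mk (Ideal.span {gw (R := Z8) 1 + gw (-1)})) h0
  rw [map_sum, map_sum] at h1
  exact h1

def P1 : Matrix (Fin 4) (Fin 4) Z8 := !![1,7,7,6; 1,1,6,1; 1,2,1,7; 2,7,1,1]
def P1i : Matrix (Fin 4) (Fin 4) Z8 := !![7,7,7,6; 1,7,6,1; 1,2,7,7; 2,7,1,7]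

lemma hP1 : IsUnit P1.det :=
  (Matrix.isUnit_iff_isUnit_det P1).mp ⟨⟨P1, P1i, by decide, by decide⟩, rfl⟩

lemma rel1 : (∑ _i : Fin 4, wcl (R := Z8) 1) = ∑ _i : Fin 4, wcl (-1) :=
  relW (fun _ => 1) (fun _ => -1) P1 hP1 (by decide)

def avec : Fin 4 → Z8ˣ := fun i => if i.val ≤ 1 then 1 else u3
def bvec : Fin 4 → Z8ˣ := fun i => if i.val ≤ 1 then 1 else -1

def P2 : Matrix (Fin 4) (Fin 4) Z8 := !![1,0,0,0; 0,1,0,0; 0,0,1,2; 0,0,6,1]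
def P2i : Matrix (Fin 4) (Fin 4) Z8 := !![1,0,0,0; 0,1,0,0; 0,0,5,6; 0,0,2,5]

lemma hP2 : IsUnit P2.det :=
  (Matrix.isUnit_iff_isUnit_det P2).mp ⟨⟨P2, P2i, by decide, by decide⟩, rfl⟩

lemma rel2 : (∑ i, wcl (avec i)) = ∑ i, wcl (bvec i) :=
  relW avec bvec P2 hP2 (by decide)

lemma rel2' : wcl (R := Z8) 1 + wcl 1 + wcl u3 + wcl u3
    = wcl 1 + wcl 1 + wcl (-1) + wcl (-1) := by
  have h := rel2
  rw [Fin.sum_univ_four, Fin.sum_univ_four] at h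
  have e0 : avec 0 = 1 := rfl
  have e1 : avec 1 = 1 := rfl
  have e2 : avec 2 = u3 := rfl
  have e3 : avec 3 = u3 := rfl
  have f0 : bvec 0 = 1 := rfl
  have f1 : bvec 1 = 1 := rfl
  have f2 : bvec 2 = -1 := rfl
  have f3 : bvec 3 = -1 := rfl
  rwa [e0, e1, e2, e3, f0, f1, f2, f3] at h

lemma h8w : (8 : Wr Z8) * wcl 1 = 0 := by
  have h1 := rel1
  rw [Fin.sum_univ_four, Fin.sum_univ_four] at h1
  linear_combination h1 + 4 * hyp0

lemma h2d : (2 : Wr Z8) * (wcl 1 - wcl u5) = 0 := by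
  linear_combination rel2' - 2 * h4rel + 2 * hyp0

/-! ### the forward map -/

def w1 : Wr Z8 := wcl 1
def dd : Wr Z8 := wcl 1 - wcl u5

lemma h8w' : ((8 : ℕ) : ℤ) • w1 = 0 := by
  rw [zsmul_eq_mul (α := Wr Z8), w1]
  push_cast
  exact h8w

lemma h2d' : ((2 : ℕ) : ℤ) • dd = 0 := by
  rw [zsmul_eq_mul (α := Wr Z8), dd]
  push_cast
  exact h2d

def g1 : ZMod 8 →+ Wr Z8 := ZMod.lift 8 ⟨zmultiplesHom (Wr Z8) w1, h8w'⟩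
def g2 : ZMod 2 →+ Wr Z8 := ZMod.lift 2 ⟨zmultiplesHom (Wr Z8) dd, h2d'⟩

lemma g1_int (k : ℤ) : g1 ((k : ZMod 8)) = k • w1 := ZMod.lift_coe 8 _ k
lemma g2_int (k : ℤ) : g2 ((k : ZMod 2)) = k • dd := ZMod.lift_coe 2 _ k

lemma g1_one : g1 1 = w1 := by
  have h := g1_int 1
  rwa [Int.cast_one, one_smul] at h

lemma g2_one : g2 1 = dd := by
  have h := g2_int 1
  rwa [Int.cast_one, one_smul] at h

def gmap : ZMod 8 × ZMod 2 →+ Wr Z8 := g1.coprod g2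

lemma gmap_apply (x : ZMod 8) (y : ZMod 2) : gmap (x, y) = g1 x + g2 y := rfl

/-! ### surjectivity -/

def piW : GRing Z8 →+* Wr Z8 :=
  (Ideal.Quotient.mk (Ideal.span {gw (R := Z8) 1 + gw (-1)})).comp
    (Ideal.Quotient.mk (Ideal.span (gwRel Z8)))

lemma piW_gen (u : Z8ˣ) : piW (gen u) = wcl u := rfl

lemma piW_surj : Function.Surjective piW := by
  intro z
  obtain ⟨w, rfl⟩ := Ideal.Quotient.mk_surjective z
  obtain ⟨x, rfl⟩ := Ideal.Quotient.mk_surjective w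
  exact ⟨x, rfl⟩

lemma wcl_u5_eq : wcl (R := Z8) u5 = w1 - dd := by rw [dd, w1]; ring

lemma range_wcl (u : Z8ˣ) : ∃ p, gmap p = wcl u := by
  have hu : ∀ v : Z8ˣ, v = 1 ∨ v = u3 ∨ v = u5 ∨ v = -1 := by decide
  have hg7 : g1 (7 : ZMod 8) = (7 : ℤ) • w1 := by
    rw [show ((7 : ZMod 8)) = (((7 : ℤ) : ZMod 8)) from by norm_num]
    exact g1_int 7
  rcases hu u with h | h | h | h <;> subst h
  · exact ⟨(1, 0), by rw [gmap_apply, map_zero, add_zero, g1_one, w1]⟩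
  · refine ⟨(7, 1), ?_⟩
    rw [gmap_apply, hg7, g2_one, zsmul_eq_mul (α := Wr Z8), w1, dd]
    push_cast
    linear_combination h8w - h4rel
  · refine ⟨(1, 1), ?_⟩
    rw [gmap_apply, g1_one, g2_one, w1, dd]
    linear_combination h2d
  · refine ⟨(7, 0), ?_⟩
    rw [gmap_apply, map_zero, add_zero, hg7, zsmul_eq_mul (α := Wr Z8), w1]
    push_cast
    linear_combination h8w - hyp0

lemma g_surj : Function.Surjective gmap := by
  intro z
  obtain ⟨x, rfl⟩ := piW_surj z
  induction x using MonoidAlgebra.induction_on with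
  | of s =>
      obtain ⟨u, rfl⟩ := QuotientGroup.mk_surjective s
      exact range_wcl u
  | add f g hf hg =>
      obtain ⟨p, hp⟩ := hf
      obtain ⟨q, hq⟩ := hg
      exact ⟨p + q, by rw [map_add, hp, hq, map_add]⟩
  | smul r f hf =>
      obtain ⟨p, hp⟩ := hf
      refine ⟨r • p, ?_⟩
      have hsd : piW (r • f) = (r : Wr Z8) * piW f := by
        rw [Algebra.smul_def, _root_.map_mul, eq_intCast (algebraMap ℤ (MonoidAlgebra ℤ (SqCl Z8))), map_intCast]
      rw [map_zsmul, hp, hsd, zsmul_eq_mul (α := Wr Z8)]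

/-! ### injectivity -/

lemma FW_w1 : FW w1 = (1, 1) := by rw [w1, FW_wcl]; decide

lemma FW_dd : FW dd = (4, 0) := by rw [dd, map_sub, FW_wcl, FW_wcl]; decide

lemma g_inj : Function.Injective gmap := by
  rw [injective_iff_map_eq_zero]
  rintro ⟨x, y⟩ h
  have hx : ((x.val : ℤ) : ZMod 8) = x := by
    rw [Int.cast_natCast]; exact ZMod.natCast_rightInverse x
  have hy : ((y.val : ℤ) : ZMod 2) = y := by
    rw [Int.cast_natCast]; exact ZMod.natCast_rightInverse y
  have hgm : gmap (x, y) = (x.val : ℤ) • w1 + (y.val : ℤ) • dd := by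
    conv_lhs => rw [gmap_apply, ← hx, ← hy]
    rw [g1_int, g2_int]
  have hFz : (x.val : ℤ) • ((1, 1) : Z8 × Z8) + (y.val : ℤ) • ((4, 0) : Z8 × Z8) = 0 := by
    have h5 := congrArg FW (hgm.symm.trans h)
    rwa [map_add, map_zsmul, map_zsmul, FW_w1, FW_dd, map_zero] at h5
  have hF2 : (x.val : ℤ) • (1 : Z8) + (y.val : ℤ) • (0 : Z8) = 0 := congrArg Prod.snd hFz
  have hF1 : (x.val : ℤ) • (1 : Z8) + (y.val : ℤ) • (4 : Z8) = 0 := congrArg Prod.fst hFz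
  have hxz : x = 0 := by
    rw [← hx]
    rw [smul_zero, add_zero, zsmul_eq_mul, mul_one] at hF2
    exact hF2
  have hyz : y = 0 := by
    have hxv : x.val = 0 := by rw [hxz]; rfl
    rw [hxv] at hF1
    rw [Int.natCast_zero, zero_smul, zero_add] at hF1
    have hy01 : ∀ z : ZMod 2, z = 0 ∨ z = 1 := by decide
    rcases hy01 y with h0 | h1
    · exact h0
    · exfalso
      have hyv : y.val = 1 := by rw [h1]; rfl
      rw [hyv, Int.natCast_one, one_smul] at hF1
      exact absurd hF1 (by decide)
  rw [hxz, hyz]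
  rfl

end WE

/-- `W(ℤ/8) ≅ ℤ/8 × ℤ/2` as abelian groups, via `(1,0) ↦ [1]` and
`(0,1) ↦ ⟨⟨5⟩⟩ = [1] − [5]`. -/
theorem witt_zmod_eight :
    ∃ e : ZMod 8 × ZMod 2 ≃+ Wr (ZMod 8),
      e (1, 0) = wcl 1 ∧
      e (0, 1) = wcl 1 - wcl (ZMod.unitOfCoprime 5 (by decide)) := by
  refine ⟨AddEquiv.ofBijective WE.gmap ⟨WE.g_inj, WE.g_surj⟩, ?_, ?_⟩
  · show WE.gmap (1, 0) = wcl 1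
    rw [WE.gmap_apply, map_zero, add_zero, WE.g1_one, WE.w1]
  · show WE.gmap (0, 1) = _
    rw [WE.gmap_apply, map_zero, zero_add, WE.g2_one, WE.dd]
    rfl

end
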